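/- Fix c, δ, η > 0. There exists a constant C > 0 such that for all integers N ≥ 1, all reals L ≥ N + 2(c+1), and all u ∈ 𝔑_η^{(N)}, one has |₍c₎G_L(u)| ≥ exp( −C·(N+1)/(L − N) ). In particular, for any r > 1 there is a constant C' > 0 such that |₍c₎G_L(u)| ≥ e^{−C'} for all u ∈ 𝔑_η^{(N)} whenever L ≥ rN and N is sufficiently large. -/

import Mathlib

/-- `₍c₎G_L(u) := L^{−c} · Γ(L−u)/Γ(L−u−c)` where `L^{−c} = exp(−c log L)` (real log). -/
noncomputable def cGL (c : ℝ) (L : ℝ) (u : ℂ) : ℂ :=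
  (Real.exp (-c * Real.log L) : ℝ) * Complex.Gamma ((L : ℂ) - u) / Complex.Gamma ((L : ℂ) - u - c)

/-- The region `𝔑_η^{(N)} = {u ∈ ℂ : |Im u| ≤ η, −η ≤ Re u ≤ N − δ}`. -/
def strip (η δ : ℝ) (N : ℕ) : Set ℂ :=
  {u : ℂ | |u.im| ≤ η ∧ -η ≤ u.re ∧ u.re ≤ (N : ℝ) - δ}

open MeasureTheory Set

/-- The truncated Gamma-type integral is at most `Γ(c)/λ^c`. -/
lemma gamma_tail_le {c lam : ℝ} (hc : 0 < c) (hlam : 0 < lam) :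
    ∫ s in (0:ℝ)..1, Real.exp (-(lam * s)) * s ^ (c - 1) ≤ Real.Gamma c / lam ^ c := by
  have hint : IntegrableOn (fun s : ℝ => s ^ (c - 1) * Real.exp (-(lam * s))) (Set.Ioi 0) := by
    have := integrableOn_rpow_mul_exp_neg_mul_rpow (p := 1) (s := c - 1) (b := lam)
      (by linarith) zero_lt_one hlam
    simpa [Real.rpow_one, neg_mul] using this
  have key : ∫ s in Set.Ioi (0:ℝ), s ^ (c - 1) * Real.exp (-(lam * s))
      = (1/lam) ^ c * Real.Gamma c := Real.integral_rpow_mul_exp_neg_mul_Ioi hc hlam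
  rw [intervalIntegral.integral_of_le zero_le_one]
  calc ∫ s in Set.Ioc (0:ℝ) 1, Real.exp (-(lam * s)) * s ^ (c - 1)
      = ∫ s in Set.Ioc (0:ℝ) 1, s ^ (c - 1) * Real.exp (-(lam * s)) := by
        congr 1; ext s; ring
    _ ≤ ∫ s in Set.Ioi (0:ℝ), s ^ (c - 1) * Real.exp (-(lam * s)) := by
        refine setIntegral_mono_set hint ?_ (Set.Ioc_subset_Ioi_self.eventuallyLE)
        filter_upwards [ae_restrict_mem measurableSet_Ioi] with x hx
        have hx0 : (0:ℝ) < x := hx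
        positivity
    _ = (1/lam) ^ c * Real.Gamma c := key
    _ = Real.Gamma c / lam ^ c := by
        rw [one_div, Real.inv_rpow hlam.le]
        ring

/-- Norm of `(t : ℂ) ^ ((c:ℂ) - 1)` for `0 ≤ t` real. -/
lemma abs_real_cpow (t : ℝ) (ht : 0 ≤ t) (c : ℝ) :
    ‖(t : ℂ) ^ ((c : ℂ) - 1)‖ = t ^ (c - 1) := by
  rcases ht.lt_or_eq with h | h
  · rw [Complex.norm_cpow_eq_rpow_re_of_pos h]
    simp
  · subst h
    by_cases hc1 : c = 1
    · subst hc1; simp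
    · rw [Complex.ofReal_zero, Complex.zero_cpow ?h, Real.zero_rpow (sub_ne_zero.mpr hc1)]
      · simp
      case h =>
        intro hcontra
        exact hc1 (by exact_mod_cast sub_eq_zero.mp hcontra)

/-- Quantitative bound for the complex Beta integral. -/
lemma beta_bound {c : ℝ} (hc : 0 < c) {s : ℂ} (hs : 1 < s.re) :
    ‖Complex.betaIntegral s c‖ ≤ Real.Gamma c / (s.re - 1) ^ c := by
  set lam := s.re - 1 with hlamdef
  have hlam : 0 < lam := by simp only [hlamdef]; linarith
  have hs0 : 0 < s.re := by linarith
  have hintf : IntervalIntegrable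
      (fun x : ℝ => (x : ℂ) ^ (s - 1) * (1 - (x : ℂ)) ^ ((c : ℂ) - 1)) volume 0 1 :=
    Complex.betaIntegral_convergent hs0 (by simpa using hc)
  have hg0 : IntervalIntegrable (fun x : ℝ => x ^ (c - 1)) volume 0 1 :=
    intervalIntegral.intervalIntegrable_rpow' (by linarith)
  have hg1 : IntervalIntegrable (fun x : ℝ => (1 - x) ^ (c - 1)) volume 0 1 := by
    simpa using (hg0.comp_sub_left 1).symm
  have hgint : IntervalIntegrable
      (fun x : ℝ => Real.exp (-(lam * (1 - x))) * (1 - x) ^ (c - 1)) volume 0 1 := by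
    apply hg1.continuousOn_mul
    exact (Real.continuous_exp.comp (by continuity)).continuousOn
  have hpt : ∀ x ∈ Set.Icc (0 : ℝ) 1,
      ‖(x : ℂ) ^ (s - 1) * (1 - (x : ℂ)) ^ ((c : ℂ) - 1)‖ ≤
        Real.exp (-(lam * (1 - x))) * (1 - x) ^ (c - 1) := by
    intro x hx
    have hx1 : (0 : ℝ) ≤ 1 - x := by linarith [hx.2]
    have h2 : ‖(1 - (x : ℂ)) ^ ((c : ℂ) - 1)‖ = (1 - x) ^ (c - 1) := by
      have hcast : (1 - (x : ℂ)) = ((1 - x : ℝ) : ℂ) := by push_cast; ring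
      rw [hcast, abs_real_cpow _ hx1]
    have h1 : ‖(x : ℂ) ^ (s - 1)‖ ≤ Real.exp (-(lam * (1 - x))) := by
      rcases hx.1.lt_or_eq with h0 | h0
      · rw [Complex.norm_cpow_eq_rpow_re_of_pos h0]
        have hre : (s - 1).re = lam := by simp [hlamdef, Complex.sub_re]
        rw [hre, Real.rpow_def_of_pos h0]
        apply Real.exp_le_exp.mpr
        have hlog := Real.log_le_sub_one_of_pos h0
        nlinarith [hlam.le]
      · rw [← h0, Complex.ofReal_zero, Complex.zero_cpow ?hne]
        · simp
          positivity
        case hne =>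
          intro hcontra
          have : s.re - 1 = 0 := by
            have := congrArg Complex.re hcontra
            simpa using this
          linarith
    rw [norm_mul, h2]
    exact mul_le_mul_of_nonneg_right h1 (Real.rpow_nonneg hx1 _)
  have hnorm : ‖Complex.betaIntegral s c‖ ≤
      ∫ x in (0:ℝ)..1, ‖(x : ℂ) ^ (s - 1) * (1 - (x : ℂ)) ^ ((c : ℂ) - 1)‖ := by
    rw [Complex.betaIntegral]
    exact intervalIntegral.norm_integral_le_integral_norm zero_le_one
  have hmono := intervalIntegral.integral_mono_on zero_le_one hintf.norm hgint hpt
  have hsub : (∫ x in (0:ℝ)..1, Real.exp (-(lam * (1 - x))) * (1 - x) ^ (c - 1))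
      = ∫ x in (0:ℝ)..1, Real.exp (-(lam * x)) * x ^ (c - 1) := by
    have h := intervalIntegral.integral_comp_sub_left
      (fun x : ℝ => Real.exp (-(lam * x)) * x ^ (c - 1)) 1 (a := 0) (b := 1)
    norm_num at h
    exact h
  calc ‖Complex.betaIntegral s c‖
      ≤ ∫ x in (0:ℝ)..1, ‖(x : ℂ) ^ (s - 1) * (1 - (x : ℂ)) ^ ((c : ℂ) - 1)‖ := hnorm
    _ ≤ ∫ x in (0:ℝ)..1, Real.exp (-(lam * (1 - x))) * (1 - x) ^ (c - 1) := hmono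
    _ = ∫ x in (0:ℝ)..1, Real.exp (-(lam * x)) * x ^ (c - 1) := hsub
    _ ≤ Real.Gamma c / lam ^ c := gamma_tail_le hc hlam

set_option maxHeartbeats 1000000 in
theorem cGL_lower_bound (c δ η : ℝ) (hc : 0 < c) (hδ : 0 < δ) (hη : 0 < η) :
    (∃ C : ℝ, 0 < C ∧ ∀ N : ℕ, 1 ≤ N → ∀ L : ℝ, (N : ℝ) + 2 * (c + 1) ≤ L →
        ∀ u ∈ strip η δ N,
          Real.exp (-C * ((N : ℝ) + 1) / (L - N)) ≤ ‖cGL c L u‖) ∧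
      ∀ r : ℝ, 1 < r → ∃ C' : ℝ, 0 < C' ∧ ∃ N₀ : ℕ, ∀ N : ℕ, N₀ ≤ N →
        ∀ L : ℝ, r * N ≤ L → ∀ u ∈ strip η δ N,
          Real.exp (-C') ≤ ‖cGL c L u‖ := by
  have key : ∀ N : ℕ, 1 ≤ N → ∀ L : ℝ, (N : ℝ) + 2 * (c + 1) ≤ L →
      ∀ u ∈ strip η δ N,
        Real.exp (-(2*c*(c+2)) * ((N : ℝ) + 1) / (L - N)) ≤ ‖cGL c L u‖ := by
    intro N hN L hL u hu
    obtain ⟨him, hre1, hre2⟩ := hu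
    have hNpos : (0:ℝ) ≤ N := Nat.cast_nonneg N
    set z : ℂ := (L : ℂ) - u with hz
    have hzre : z.re = L - u.re := by simp [hz, Complex.sub_re]
    have hLNpos : 0 < L - N := by linarith
    set s : ℂ := z - (c : ℂ) with hs
    have hsre : s.re = L - u.re - c := by
      simp [hs, hzre, Complex.sub_re, Complex.ofReal_re]
    have hsre1 : 1 < s.re := by rw [hsre]; linarith
    set A : ℝ := s.re - 1 with hA
    have hApos : 0 < A := by rw [hA]; linarith
    have hAge : (L - N)/2 ≤ A := by rw [hA, hsre]; linarith
    have hLA : L - A ≤ (N : ℝ) + c + 1 := by rw [hA, hsre]; linarith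
    have hszre : 0 < s.re := by linarith
    have hcre : 0 < (Complex.ofReal c).re := by simpa using hc
    have hbeta := Complex.Gamma_mul_Gamma_eq_betaIntegral hszre hcre
    have hsc : s + (c : ℂ) = z := by rw [hs]; ring
    rw [hsc] at hbeta
    have hGz : Complex.Gamma z ≠ 0 := Complex.Gamma_ne_zero_of_re_pos (by rw [hzre]; linarith)
    have hGs : Complex.Gamma s ≠ 0 := Complex.Gamma_ne_zero_of_re_pos hszre
    have hGc : Complex.Gamma (c : ℂ) = (Real.Gamma c : ℂ) := Complex.Gamma_ofReal c
    have hGcpos : 0 < Real.Gamma c := Real.Gamma_pos_of_pos hc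
    have hBne : Complex.betaIntegral s c ≠ 0 := by
      intro h0; rw [h0, mul_zero] at hbeta
      exact (mul_ne_zero hGs (by rw [hGc]; exact_mod_cast hGcpos.ne')) hbeta
    have hratio : Complex.Gamma z / Complex.Gamma s
        = (Real.Gamma c : ℂ) / Complex.betaIntegral s c := by
      rw [div_eq_div_iff hGs hBne, ← hGc]
      linear_combination -hbeta
    have hBpos : 0 < ‖Complex.betaIntegral s c‖ :=
      norm_pos_iff.mpr hBne
    have hbb := beta_bound hc hsre1
    rw [← hA] at hbb
    have h1 : A ^ c ≤ Real.Gamma c / ‖Complex.betaIntegral s c‖ := by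
      rw [le_div_iff₀ hBpos]
      calc A ^ c * ‖Complex.betaIntegral s c‖
          ≤ A ^ c * (Real.Gamma c / A ^ c) := by
            apply mul_le_mul_of_nonneg_left hbb (Real.rpow_nonneg hApos.le _)
        _ = Real.Gamma c := by
            rw [mul_div_cancel₀ _ (ne_of_gt (Real.rpow_pos_of_pos hApos _))]
    have habs : ‖Complex.Gamma z‖ / ‖Complex.Gamma s‖
        = Real.Gamma c / ‖Complex.betaIntegral s c‖ := by
      rw [← norm_div, hratio, norm_div, Complex.norm_real, Real.norm_of_nonneg hGcpos.le]
    have hcGL : ‖cGL c L u‖ = Real.exp (-c * Real.log L) *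
        (‖Complex.Gamma z‖ / ‖Complex.Gamma s‖) := by
      rw [cGL, ← hz, ← hs, norm_div, norm_mul, Complex.norm_real,
        Real.norm_of_nonneg (Real.exp_pos _).le]
      ring
    have hmain : Real.exp (-c * Real.log L) * A ^ c ≤ ‖cGL c L u‖ := by
      rw [hcGL, habs]
      exact mul_le_mul_of_nonneg_left h1 (Real.exp_pos _).le
    refine le_trans ?_ hmain
    rw [Real.rpow_def_of_pos hApos, ← Real.exp_add]
    apply Real.exp_le_exp.mpr
    have hLpos : 0 < L := by linarith
    have hlog : Real.log L - Real.log A ≤ (L - A)/A := by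
      rw [← Real.log_div hLpos.ne' hApos.ne']
      have h := Real.log_le_sub_one_of_pos (div_pos hLpos hApos)
      calc Real.log (L/A) ≤ L/A - 1 := h
        _ = (L - A)/A := by field_simp
    have hdiv : (L - A)/A ≤ 2*((N:ℝ)+c+1)/(L-N) := by
      rw [div_le_div_iff₀ hApos hLNpos]
      nlinarith [mul_le_mul_of_nonneg_right hLA hLNpos.le, hAge, hc.le]
    have hfin : c * (Real.log L - Real.log A) ≤ 2*c*(c+2) * ((N:ℝ)+1) / (L-N) := by
      have h2 : c * ((L - A)/A) ≤ c * (2*((N:ℝ)+c+1)/(L-N)) :=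
        mul_le_mul_of_nonneg_left hdiv hc.le
      have h3 : c * (2*((N:ℝ)+c+1)/(L-N)) ≤ 2*c*(c+2) * ((N:ℝ)+1) / (L-N) := by
        rw [show c * (2*((N:ℝ)+c+1)/(L-N)) = 2*c*((N:ℝ)+c+1)/(L-N) from by ring,
          div_le_div_iff₀ hLNpos hLNpos]
        nlinarith [mul_nonneg (mul_nonneg hc.le hNpos) hLNpos.le,
          mul_nonneg hc.le hLNpos.le,
          mul_nonneg (mul_nonneg (mul_nonneg hc.le hc.le) hNpos) hLNpos.le]
      have h4 : c * (Real.log L - Real.log A) ≤ c * ((L - A)/A) :=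
        mul_le_mul_of_nonneg_left hlog hc.le
      linarith
    have : -(2*c*(c+2)) * ((N : ℝ) + 1) / (L - N)
        = -(2*c*(c+2) * ((N:ℝ)+1) / (L-N)) := by ring
    rw [this]
    linarith [hfin]
  constructor
  · exact ⟨2*c*(c+2), by positivity, key⟩
  · intro r hr
    have hrneg : 0 < r - 1 := sub_pos.mpr hr
    refine ⟨2*(2*c*(c+2))/(r-1), by positivity, max 1 ⌈(2*(c+1))/(r-1)⌉₊, ?_⟩
    intro N hN L hL u hu
    have hN1 : 1 ≤ N := le_trans (le_max_left _ _) hN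
    have hN1' : (1:ℝ) ≤ N := by exact_mod_cast hN1
    have hceil : (2*(c+1))/(r-1) ≤ (N:ℝ) := by
      refine le_trans (Nat.le_ceil _) ?_
      exact_mod_cast le_trans (le_max_right 1 _) hN
    have h2c : 2*(c+1) ≤ (r-1)*N := by
      rw [div_le_iff₀ hrneg] at hceil; linarith
    have hL' : (N : ℝ) + 2*(c+1) ≤ L := by
      have : r*(N:ℝ) = N + (r-1)*N := by ring
      linarith
    refine le_trans ?_ (key N hN1 L hL' u hu)
    apply Real.exp_le_exp.mpr
    have hLN : 0 < L - N := by linarith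
    have h3 : (r-1)*(N:ℝ) ≤ L - N := by linarith [hL, hL']
    have hrw : -(2*c*(c+2)) * ((N : ℝ) + 1) / (L - N)
        = -(2*c*(c+2) * (((N:ℝ)+1) / (L-N))) := by ring
    rw [hrw, neg_le_neg_iff]
    have hC : 0 ≤ 2*c*(c+2) := by positivity
    have hdd : ((N:ℝ)+1) / (L-N) ≤ 2/(r-1) := by
      rw [div_le_div_iff₀ hLN hrneg]
      nlinarith [h3, hN1', hrneg.le]
    calc 2*c*(c+2) * (((N:ℝ)+1) / (L-N)) ≤ 2*c*(c+2) * (2/(r-1)) :=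
          mul_le_mul_of_nonneg_left hdd hC
      _ = 2*(2*c*(c+2))/(r-1) := by ring
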